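/- arXiv:math/0408369 — 2 statements merged into one kernel-verified Lean document; each statement's English description precedes it below -/
import Mathlib

section
/- For 0 < |p| < 1 and 0 < |q| < 1, the function z ↦ Γ(z;q,p) = ∏_{j,k≥0}(1 − z⁻¹q^{j+1}p^{k+1})/(1 − zq^jp^k) has a simple pole at z = 1, with residue-type behavior: lim_{z→1} (1 − z) Γ(z;q,p) = 1/((q;q)_∞ (p;p)_∞). -/
open Complex Filter Topology

noncomputable def qPochInf (a p : ℂ) : ℂ := ∏' j : ℕ, (1 - a * p ^ j)

noncomputable def ellGamma (z q p : ℂ) : ℂ :=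
  ∏' jk : ℕ × ℕ, (1 - z⁻¹ * q ^ (jk.1 + 1) * p ^ (jk.2 + 1)) / (1 - z * q ^ jk.1 * p ^ jk.2)

lemma my_hasProd_one_sub {ι : Type*} {u : ι → ℂ} (hu : Summable u)
    (h1 : ∀ i, ‖u i‖ < 1) :
    HasProd (fun i => 1 - u i) (Complex.exp (∑' i, Complex.log (1 - u i))) := by
  have hne : ∀ i, (1 : ℂ) - u i ≠ 0 := by
    intro i h
    rw [sub_eq_zero] at h
    have := h1 i
    rw [← h] at this
    simp at this
  have H := hu.clog_one_sub.hasSum.cexp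
  have heq : (Complex.exp ∘ fun i => Complex.log (1 - u i)) = fun i => 1 - u i :=
    funext fun i => Complex.exp_log (hne i)
  rwa [heq] at H

lemma my_hasProd_div {ι : Type*} {f g : ι → ℂ} {P Q : ℂ} (hf : HasProd f P)
    (hg : HasProd g Q) (hQ : Q ≠ 0) : HasProd (fun i => f i / g i) (P / Q) := by
  have h := Filter.Tendsto.div hf hg hQ
  have : (fun s : Finset ι => ∏ x ∈ s, f x / g x)
      = fun s : Finset ι => (∏ x ∈ s, f x) / ∏ x ∈ s, g x := by
    funext s; exact Finset.prod_div_distrib f g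
  rw [HasProd, this]
  exact h

lemma my_norm_log_one_sub_le {w : ℂ} {s : ℝ} (hs : s < 1) (hw : ‖w‖ ≤ s) :
    ‖Complex.log (1 - w)‖ ≤ (s * (1 - s)⁻¹ / 2 + 1) * ‖w‖ := by
  have h0 : (0:ℝ) ≤ ‖w‖ := norm_nonneg w
  have hw1 : ‖w‖ < 1 := lt_of_le_of_lt hw hs
  have h := Complex.norm_log_one_add_le (z := -w) (by rwa [norm_neg])
  rw [norm_neg, ← sub_eq_add_neg] at h
  have hinv : (1 - ‖w‖)⁻¹ ≤ (1 - s)⁻¹ := by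
    apply inv_anti₀ (by linarith) (by linarith)
  have hinv0 : (0:ℝ) ≤ (1 - s)⁻¹ := by
    apply inv_nonneg.2; linarith
  have h2 : ‖w‖ ^ 2 ≤ s * ‖w‖ := by nlinarith
  have hsq : ‖w‖ ^ 2 * (1 - ‖w‖)⁻¹ ≤ s * ‖w‖ * (1 - s)⁻¹ := by
    apply mul_le_mul h2 hinv (by apply inv_nonneg.2; linarith) (by nlinarith)
  calc ‖Complex.log (1 - w)‖ ≤ ‖w‖ ^ 2 * (1 - ‖w‖)⁻¹ / 2 + ‖w‖ := h
    _ ≤ s * ‖w‖ * (1 - s)⁻¹ / 2 + ‖w‖ := by linarith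
    _ = (s * (1 - s)⁻¹ / 2 + 1) * ‖w‖ := by ring

lemma my_summable_G {q p : ℂ} (hq1 : ‖q‖ < 1) (hp1 : ‖p‖ < 1) :
    Summable (fun jk : ℕ × ℕ => ‖q‖ ^ jk.1 * ‖p‖ ^ jk.2) :=
  (summable_geometric_of_lt_one (norm_nonneg q) hq1).mul_of_nonneg
    (summable_geometric_of_lt_one (norm_nonneg p) hp1)
    (fun _ => pow_nonneg (norm_nonneg q) _) (fun _ => pow_nonneg (norm_nonneg p) _)

lemma my_prod_identity {q p : ℂ} (hq1 : ‖q‖ < 1) (hp1 : ‖p‖ < 1) :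
    Complex.exp (∑' jk : ℕ × ℕ,
        Complex.log (1 - (if jk = (0,0) then 0 else q ^ jk.1 * p ^ jk.2)))
      = qPochInf q q * qPochInf p p *
        Complex.exp (∑' jk : ℕ × ℕ, Complex.log (1 - q ^ (jk.1+1) * p ^ (jk.2+1))) := by
  set G : ℕ × ℕ → ℝ := fun jk => ‖q‖ ^ jk.1 * ‖p‖ ^ jk.2 with hGdef
  have hG : Summable G := my_summable_G hq1 hp1
  have hG1 : ∀ jk : ℕ × ℕ, G jk ≤ 1 := fun jk =>
    mul_le_one₀ (pow_le_one₀ (norm_nonneg q) hq1.le) (pow_nonneg (norm_nonneg p) _)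
      (pow_le_one₀ (norm_nonneg p) hp1.le)
  -- the four families
  set uD : ℕ × ℕ → ℂ := fun jk => if jk = (0,0) then 0 else q ^ jk.1 * p ^ jk.2 with huD
  set uN : ℕ × ℕ → ℂ := fun jk => q ^ (jk.1+1) * p ^ (jk.2+1) with huN
  set uU : ℕ × ℕ → ℂ := fun jk => if jk.2 = 0 ∧ jk.1 ≠ 0 then q ^ jk.1 else 0 with huU
  set uV : ℕ × ℕ → ℂ := fun jk => if jk.1 = 0 ∧ jk.2 ≠ 0 then p ^ jk.2 else 0 with huV
  set uW : ℕ × ℕ → ℂ := fun jk => if jk.1 ≠ 0 ∧ jk.2 ≠ 0 then q ^ jk.1 * p ^ jk.2 else 0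
    with huW
  have hnormqp : ∀ jk : ℕ × ℕ, ‖q ^ jk.1 * p ^ jk.2‖ = G jk := by
    intro jk; rw [norm_mul, norm_pow, norm_pow]
  -- norms < 1 for nonzero indices
  have hlt : ∀ jk : ℕ × ℕ, jk ≠ (0,0) → ‖q ^ jk.1 * p ^ jk.2‖ < 1 := by
    rintro ⟨j, k⟩ hjk
    rw [norm_mul, norm_pow, norm_pow]
    rcases Nat.eq_zero_or_pos j with rfl | hj
    · have hk : k ≠ 0 := by simpa using hjk
      have : ‖p‖ ^ k < 1 := pow_lt_one₀ (norm_nonneg p) hp1 hk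
      simpa using this
    · have h1 : ‖q‖ ^ j < 1 := pow_lt_one₀ (norm_nonneg q) hq1 hj.ne'
      have h2 : ‖p‖ ^ k ≤ 1 := pow_le_one₀ (norm_nonneg p) hp1.le
      nlinarith [pow_nonneg (norm_nonneg q) j, pow_nonneg (norm_nonneg p) k]
  -- summability and norm bounds
  have hsumD : Summable uD := by
    apply Summable.of_norm_bounded hG
    intro jk
    rw [huD]
    by_cases h : jk = (0,0)
    · simp only [h, if_pos rfl]
      simpa using mul_nonneg (pow_nonneg (norm_nonneg q) _) (pow_nonneg (norm_nonneg p) _)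
    · simp only [if_neg h]
      exact (hnormqp jk).le
  have hD1 : ∀ jk, ‖uD jk‖ < 1 := by
    intro jk
    rw [huD]
    by_cases h : jk = (0,0)
    · simp [h]
    · simp only [if_neg h]; exact hlt jk h
  have hsumN : Summable uN := by
    apply Summable.of_norm_bounded hG
    intro jk
    rw [huN, norm_mul, norm_pow, norm_pow, hGdef]
    have h1 : ‖q‖ ^ (jk.1+1) ≤ ‖q‖ ^ jk.1 :=
      pow_le_pow_of_le_one (norm_nonneg q) hq1.le (Nat.le_succ _)
    have h2 : ‖p‖ ^ (jk.2+1) ≤ ‖p‖ ^ jk.2 :=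
      pow_le_pow_of_le_one (norm_nonneg p) hp1.le (Nat.le_succ _)
    exact mul_le_mul h1 h2 (pow_nonneg (norm_nonneg p) _) (pow_nonneg (norm_nonneg q) _)
  have hN1 : ∀ jk : ℕ × ℕ, ‖uN jk‖ < 1 := fun jk => hlt (jk.1+1, jk.2+1) (by simp)
  have hsumU : Summable uU := by
    apply Summable.of_norm_bounded hG
    intro jk
    rw [huU]
    by_cases h : jk.2 = 0 ∧ jk.1 ≠ 0
    · simp only [if_pos h, norm_pow, hGdef]
      simp [h.1]
    · simp only [if_neg h, norm_zero]
      exact mul_nonneg (pow_nonneg (norm_nonneg q) _) (pow_nonneg (norm_nonneg p) _)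
  have hU1 : ∀ jk, ‖uU jk‖ < 1 := by
    intro jk
    rw [huU]
    by_cases h : jk.2 = 0 ∧ jk.1 ≠ 0
    · simp only [if_pos h, norm_pow]
      exact pow_lt_one₀ (norm_nonneg q) hq1 h.2
    · simp [if_neg h]
  have hsumV : Summable uV := by
    apply Summable.of_norm_bounded hG
    intro jk
    rw [huV]
    by_cases h : jk.1 = 0 ∧ jk.2 ≠ 0
    · simp only [if_pos h, norm_pow, hGdef]
      simp [h.1]
    · simp only [if_neg h, norm_zero]
      exact mul_nonneg (pow_nonneg (norm_nonneg q) _) (pow_nonneg (norm_nonneg p) _)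
  have hV1 : ∀ jk, ‖uV jk‖ < 1 := by
    intro jk
    rw [huV]
    by_cases h : jk.1 = 0 ∧ jk.2 ≠ 0
    · simp only [if_pos h, norm_pow]
      exact pow_lt_one₀ (norm_nonneg p) hp1 h.2
    · simp [if_neg h]
  have hsumW : Summable uW := by
    apply Summable.of_norm_bounded hG
    intro jk
    rw [huW]
    by_cases h : jk.1 ≠ 0 ∧ jk.2 ≠ 0
    · simp only [if_pos h]; exact (hnormqp jk).le
    · simp only [if_neg h, norm_zero]
      exact mul_nonneg (pow_nonneg (norm_nonneg q) _) (pow_nonneg (norm_nonneg p) _)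
  have hW1 : ∀ jk, ‖uW jk‖ < 1 := by
    intro jk
    rw [huW]
    by_cases h : jk.1 ≠ 0 ∧ jk.2 ≠ 0
    · simp only [if_pos h]
      exact hlt jk (by rintro rfl; exact h.1 rfl)
    · simp [if_neg h]
  -- HasProd statements
  have hPD := my_hasProd_one_sub hsumD hD1
  have hPN := my_hasProd_one_sub hsumN hN1
  have hPU := my_hasProd_one_sub hsumU hU1
  have hPV := my_hasProd_one_sub hsumV hV1
  have hPW := my_hasProd_one_sub hsumW hW1
  -- pointwise factorization
  have hfact : (fun jk => 1 - uD jk)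
      = fun jk => (1 - uU jk) * (1 - uV jk) * (1 - uW jk) := by
    funext jk
    obtain ⟨j, k⟩ := jk
    rw [huD, huU, huV, huW]
    by_cases hj : j = 0 <;> by_cases hk : k = 0 <;>
      simp [hj, hk, Prod.ext_iff] <;> ring
  -- split the product
  have hsplit : (∏' jk, (1 - uD jk))
      = (∏' jk, (1 - uU jk)) * (∏' jk, (1 - uV jk)) * (∏' jk, (1 - uW jk)) := by
    rw [hfact]
    rw [Multipliable.tprod_mul (hPU.multipliable.mul hPV.multipliable) hPW.multipliable,
      Multipliable.tprod_mul hPU.multipliable hPV.multipliable]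
  -- evaluate the three products
  have hUval : (∏' jk, (1 - uU jk)) = qPochInf q q := by
    have hinj : Function.Injective (fun j : ℕ => ((j+1, 0) : ℕ × ℕ)) := by
      intro a b h
      simpa using h
    have hsupp : Function.mulSupport (fun jk => 1 - uU jk)
        ⊆ Set.range (fun j : ℕ => ((j+1, 0) : ℕ × ℕ)) := by
      rintro ⟨j, k⟩ hjk
      rw [Function.mem_mulSupport] at hjk
      by_cases h : k = 0 ∧ j ≠ 0
      · obtain ⟨n, rfl⟩ := Nat.exists_eq_succ_of_ne_zero h.2
        exact ⟨n, by simp [h.1]⟩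
      · exfalso; apply hjk; rw [huU]; simp only [if_neg h]; ring
    rw [← hinj.tprod_eq hsupp]
    show _ = ∏' j : ℕ, (1 - q * q ^ j)
    refine tprod_congr fun j => ?_
    rw [huU]
    simp [pow_succ']
  have hVval : (∏' jk, (1 - uV jk)) = qPochInf p p := by
    have hinj : Function.Injective (fun k : ℕ => ((0, k+1) : ℕ × ℕ)) := by
      intro a b h
      simpa using h
    have hsupp : Function.mulSupport (fun jk => 1 - uV jk)
        ⊆ Set.range (fun k : ℕ => ((0, k+1) : ℕ × ℕ)) := by
      rintro ⟨j, k⟩ hjk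
      rw [Function.mem_mulSupport] at hjk
      by_cases h : j = 0 ∧ k ≠ 0
      · obtain ⟨n, rfl⟩ := Nat.exists_eq_succ_of_ne_zero h.2
        exact ⟨n, by simp [h.1]⟩
      · exfalso; apply hjk; rw [huV]; simp only [if_neg h]; ring
    rw [← hinj.tprod_eq hsupp]
    show _ = ∏' k : ℕ, (1 - p * p ^ k)
    refine tprod_congr fun k => ?_
    rw [huV]
    simp [pow_succ']
  have hWval : (∏' jk, (1 - uW jk)) = ∏' jk : ℕ × ℕ, (1 - uN jk) := by
    have hinj : Function.Injective (fun jk : ℕ × ℕ => ((jk.1+1, jk.2+1) : ℕ × ℕ)) := by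
      rintro ⟨a, b⟩ ⟨c, d⟩ h
      simp only [Prod.mk.injEq, Nat.succ_inj] at h
      exact Prod.ext h.1 h.2
    have hsupp : Function.mulSupport (fun jk => 1 - uW jk)
        ⊆ Set.range (fun jk : ℕ × ℕ => ((jk.1+1, jk.2+1) : ℕ × ℕ)) := by
      rintro ⟨j, k⟩ hjk
      rw [Function.mem_mulSupport] at hjk
      by_cases h : j ≠ 0 ∧ k ≠ 0
      · obtain ⟨n, rfl⟩ := Nat.exists_eq_succ_of_ne_zero h.1
        obtain ⟨m, rfl⟩ := Nat.exists_eq_succ_of_ne_zero h.2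
        exact ⟨(n, m), rfl⟩
      · exfalso; apply hjk; rw [huW]; simp only [if_neg h]; ring
    rw [← hinj.tprod_eq hsupp]
    refine tprod_congr fun jk => ?_
    rw [huW, huN]
    simp
  rw [← hPD.tprod_eq, ← hPN.tprod_eq, hsplit, hUval, hVval, hWval]

theorem ellGamma_residue_at_one (q p : ℂ)
    (hq0 : 0 < ‖q‖) (hq1 : ‖q‖ < 1)
    (hp0 : 0 < ‖p‖) (hp1 : ‖p‖ < 1) :
    Tendsto (fun z : ℂ => (1 - z) * ellGamma z q p) (𝓝[≠] (1 : ℂ))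
      (𝓝 (1 / (qPochInf q q * qPochInf p p))) := by
  have hq1' : ‖q‖ < 1 := hq1
  have hp1' : ‖p‖ < 1 := hp1
  set m : ℝ := max ‖q‖ ‖p‖ with hmdef
  have hm1 : m < 1 := max_lt hq1' hp1'
  have hm0 : (0:ℝ) ≤ m := le_trans (norm_nonneg q) (le_max_left _ _)
  have hqp1 : ‖q * p‖ < 1 := by
    rw [norm_mul]
    nlinarith [norm_nonneg q, norm_nonneg p]
  have hqp0 : (0:ℝ) ≤ ‖q * p‖ := norm_nonneg _
  set δ : ℝ := min ((1 - m)/2) ((1 - ‖q * p‖)/2) with hδdef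
  have hδ0 : 0 < δ := lt_min (by linarith) (by linarith)
  have hδm : δ ≤ (1 - m)/2 := min_le_left _ _
  have hδqp : δ ≤ (1 - ‖q * p‖)/2 := min_le_right _ _
  have hδhalf : δ ≤ 1/2 := le_trans hδqp (by linarith)
  set s : ℝ := ‖q * p‖ / (1 - δ) with hsdef
  set t : ℝ := (1 + δ) * m with htdef
  have h1δ : (0:ℝ) < 1 - δ := by linarith
  have hs1 : s < 1 := by
    rw [hsdef, div_lt_one h1δ]; linarith
  have hs0 : 0 ≤ s := div_nonneg hqp0 h1δ.le
  have ht1 : t < 1 := by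
    rw [htdef]; nlinarith
  have ht0 : 0 ≤ t := mul_nonneg (by linarith) hm0
  set CA : ℝ := s * (1 - s)⁻¹ / 2 + 1 with hCAdef
  set CB : ℝ := t * (1 - t)⁻¹ / 2 + 1 with hCBdef
  have hCA0 : 0 ≤ CA := by
    have : (0:ℝ) ≤ (1 - s)⁻¹ := inv_nonneg.2 (by linarith)
    rw [hCAdef]; positivity
  have hCB0 : 0 ≤ CB := by
    have : (0:ℝ) ≤ (1 - t)⁻¹ := inv_nonneg.2 (by linarith)
    rw [hCBdef]; positivity
  set G : ℕ × ℕ → ℝ := fun jk => ‖q‖ ^ jk.1 * ‖p‖ ^ jk.2 with hGdef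
  have hG : Summable G := my_summable_G hq1' hp1'
  have hG0 : ∀ jk, 0 ≤ G jk := fun jk =>
    mul_nonneg (pow_nonneg (norm_nonneg q) _) (pow_nonneg (norm_nonneg p) _)
  have hG1 : ∀ jk : ℕ × ℕ, G jk ≤ 1 := fun jk =>
    mul_le_one₀ (pow_le_one₀ (norm_nonneg q) hq1'.le) (pow_nonneg (norm_nonneg p) _)
      (pow_le_one₀ (norm_nonneg p) hp1'.le)
  have hGm : ∀ jk : ℕ × ℕ, jk ≠ (0,0) → G jk ≤ m := by
    rintro ⟨j, k⟩ hjk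
    rcases Nat.eq_zero_or_pos j with rfl | hj
    · have hk : k ≠ 0 := by simpa using hjk
      have : ‖p‖ ^ k ≤ ‖p‖ := pow_le_of_le_one (norm_nonneg p) hp1'.le hk
      calc G (0, k) = ‖p‖ ^ k := by rw [hGdef]; simp
        _ ≤ ‖p‖ := this
        _ ≤ m := le_max_right _ _
    · have h1 : ‖q‖ ^ j ≤ ‖q‖ := pow_le_of_le_one (norm_nonneg q) hq1'.le hj.ne'
      have h2 : ‖p‖ ^ k ≤ 1 := pow_le_one₀ (norm_nonneg p) hp1'.le
      calc G (j, k) = ‖q‖ ^ j * ‖p‖ ^ k := rfl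
        _ ≤ ‖q‖ * 1 := mul_le_mul h1 h2 (pow_nonneg (norm_nonneg p) _) (norm_nonneg q)
        _ = ‖q‖ := mul_one _
        _ ≤ m := le_max_left _ _
  -- bounds on ball
  have hzball : ∀ z : ℂ, z ∈ Metric.ball (1:ℂ) δ → 1 - δ ≤ ‖z‖ ∧ ‖z‖ ≤ 1 + δ := by
    intro z hz
    rw [Metric.mem_ball, dist_eq_norm] at hz
    have h3 := abs_norm_sub_norm_le z 1
    rw [norm_one] at h3
    have h4 := (abs_le.1 h3).1
    have h5 := (abs_le.1 h3).2
    exact ⟨by linarith [hz.le], by linarith [hz.le]⟩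
  have hz0 : ∀ z : ℂ, z ∈ Metric.ball (1:ℂ) δ → z ≠ 0 := by
    intro z hz h0
    have := (hzball z hz).1
    rw [h0, norm_zero] at this
    linarith
  -- norm bound for numerator terms
  have normA : ∀ z ∈ Metric.ball (1:ℂ) δ, ∀ jk : ℕ × ℕ,
      ‖z⁻¹ * q ^ (jk.1 + 1) * p ^ (jk.2 + 1)‖ ≤ s * G jk := by
    intro z hz jk
    have hzn := (hzball z hz).1
    have hz0' : (0:ℝ) < ‖z‖ := lt_of_lt_of_le h1δ hzn
    have hinv : ‖z‖⁻¹ ≤ (1 - δ)⁻¹ := inv_anti₀ h1δ hzn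
    calc ‖z⁻¹ * q ^ (jk.1 + 1) * p ^ (jk.2 + 1)‖
        = ‖z‖⁻¹ * (‖q * p‖ * G jk) := by
          rw [norm_mul, norm_mul, norm_inv, norm_pow, norm_pow, norm_mul, hGdef]
          rw [pow_succ, pow_succ]
          ring
      _ ≤ (1 - δ)⁻¹ * (‖q * p‖ * G jk) := by
          apply mul_le_mul_of_nonneg_right hinv
          exact mul_nonneg hqp0 (hG0 jk)
      _ = s * G jk := by rw [hsdef]; ring
  have normAs : ∀ z ∈ Metric.ball (1:ℂ) δ, ∀ jk : ℕ × ℕ,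
      ‖z⁻¹ * q ^ (jk.1 + 1) * p ^ (jk.2 + 1)‖ ≤ s := by
    intro z hz jk
    calc ‖z⁻¹ * q ^ (jk.1 + 1) * p ^ (jk.2 + 1)‖ ≤ s * G jk := normA z hz jk
      _ ≤ s * 1 := mul_le_mul_of_nonneg_left (hG1 jk) hs0
      _ = s := mul_one s
  -- denominator terms with the (0,0) factor removed
  set B : ℂ → ℕ × ℕ → ℂ :=
    fun z jk => if jk = (0,0) then 0 else z * q ^ jk.1 * p ^ jk.2 with hBdef
  have normB : ∀ z ∈ Metric.ball (1:ℂ) δ, ∀ jk : ℕ × ℕ,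
      ‖B z jk‖ ≤ (1 + δ) * G jk := by
    intro z hz jk
    rw [hBdef]
    by_cases h : jk = (0,0)
    · simp only [if_pos h, norm_zero]
      exact mul_nonneg (by linarith) (hG0 jk)
    · simp only [if_neg h]
      rw [norm_mul, norm_mul, norm_pow, norm_pow]
      have := (hzball z hz).2
      calc ‖z‖ * ‖q‖ ^ jk.1 * ‖p‖ ^ jk.2 = ‖z‖ * G jk := by rw [hGdef]; ring
        _ ≤ (1 + δ) * G jk := mul_le_mul_of_nonneg_right this (hG0 jk)
  have normBt : ∀ z ∈ Metric.ball (1:ℂ) δ, ∀ jk : ℕ × ℕ, ‖B z jk‖ ≤ t := by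
    intro z hz jk
    rw [hBdef]
    by_cases h : jk = (0,0)
    · simp only [if_pos h, norm_zero]; exact ht0
    · simp only [if_neg h]
      rw [norm_mul, norm_mul, norm_pow, norm_pow]
      have h1 := (hzball z hz).2
      have h2 : ‖q‖ ^ jk.1 * ‖p‖ ^ jk.2 ≤ m := hGm jk h
      calc ‖z‖ * ‖q‖ ^ jk.1 * ‖p‖ ^ jk.2 = ‖z‖ * (‖q‖ ^ jk.1 * ‖p‖ ^ jk.2) := by ring
        _ ≤ (1 + δ) * m := mul_le_mul h1 h2 (hG0 (jk.1, jk.2)) (by linarith)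
        _ = t := htdef.symm
  -- membership of the ball in the punctured filter
  have hball : ∀ᶠ z in 𝓝[≠] (1:ℂ), z ∈ Metric.ball (1:ℂ) δ :=
    Eventually.filter_mono nhdsWithin_le_nhds
      (Filter.eventually_mem_set.mpr (Metric.ball_mem_nhds (1:ℂ) hδ0))
  -- convergence of the numerator log-sum
  have hSA : Tendsto
      (fun z : ℂ => ∑' jk : ℕ × ℕ, Complex.log (1 - z⁻¹ * q ^ (jk.1+1) * p ^ (jk.2+1)))
      (𝓝[≠] (1:ℂ))
      (𝓝 (∑' jk : ℕ × ℕ, Complex.log (1 - q ^ (jk.1+1) * p ^ (jk.2+1)))) := by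
    apply tendsto_tsum_of_dominated_convergence
      (bound := fun jk : ℕ × ℕ => CA * (s * G jk))
    · have := hG.mul_left (CA * s)
      exact this.congr fun jk => by ring
    · intro jk
      have hc1 : ‖q ^ (jk.1+1) * p ^ (jk.2+1)‖ < 1 := by
        rw [norm_mul, norm_pow, norm_pow]
        have a1 : ‖q‖ ^ (jk.1+1) ≤ ‖q‖ :=
          pow_le_of_le_one (norm_nonneg q) hq1'.le (Nat.succ_ne_zero _)
        have a2 : ‖p‖ ^ (jk.2+1) ≤ 1 := pow_le_one₀ (norm_nonneg p) hp1'.le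
        nlinarith [pow_nonneg (norm_nonneg q) (jk.1+1), pow_nonneg (norm_nonneg p) (jk.2+1)]
      have hslit : (1 - q ^ (jk.1+1) * p ^ (jk.2+1)) ∈ Complex.slitPlane := by
        rw [Complex.mem_slitPlane_iff]
        left
        have hre : (q ^ (jk.1+1) * p ^ (jk.2+1)).re < 1 :=
          lt_of_le_of_lt (Complex.re_le_norm _) hc1
        simp only [Complex.sub_re, Complex.one_re]
        linarith
      have hcont1 : ContinuousAt (fun z : ℂ => 1 - z⁻¹ * q ^ (jk.1+1) * p ^ (jk.2+1)) 1 :=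
        continuousAt_const.sub
          (((continuousAt_inv₀ one_ne_zero).mul continuousAt_const).mul continuousAt_const)
      have hten : Tendsto (fun z : ℂ => 1 - z⁻¹ * q ^ (jk.1+1) * p ^ (jk.2+1)) (𝓝[≠] (1:ℂ))
          (𝓝 (1 - q ^ (jk.1+1) * p ^ (jk.2+1))) := by
        refine Tendsto.mono_left ?_ nhdsWithin_le_nhds
        simpa using hcont1.tendsto
      exact hten.clog hslit
    · filter_upwards [hball] with z hz
      intro jk
      calc ‖Complex.log (1 - z⁻¹ * q ^ (jk.1+1) * p ^ (jk.2+1))‖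
          ≤ CA * ‖z⁻¹ * q ^ (jk.1+1) * p ^ (jk.2+1)‖ :=
            my_norm_log_one_sub_le hs1 (normAs z hz jk)
        _ ≤ CA * (s * G jk) := mul_le_mul_of_nonneg_left (normA z hz jk) hCA0
  -- convergence of the denominator log-sum
  have hSB : Tendsto
      (fun z : ℂ => ∑' jk : ℕ × ℕ, Complex.log (1 - B z jk))
      (𝓝[≠] (1:ℂ))
      (𝓝 (∑' jk : ℕ × ℕ,
        Complex.log (1 - (if jk = (0,0) then 0 else q ^ jk.1 * p ^ jk.2)))) := by
    apply tendsto_tsum_of_dominated_convergence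
      (bound := fun jk : ℕ × ℕ => CB * ((1 + δ) * G jk))
    · have := hG.mul_left (CB * (1 + δ))
      exact this.congr fun jk => by ring
    · intro jk
      by_cases h : jk = (0,0)
      · have hfun : (fun z : ℂ => Complex.log (1 - B z jk)) = fun _ : ℂ => 0 := by
          funext z
          rw [hBdef]
          simp [h]
        rw [hfun]
        simp only [if_pos h]
        simpa using tendsto_const_nhds
      · have hGm' := hGm jk h
        have hc1 : ‖q ^ jk.1 * p ^ jk.2‖ < 1 := by
          rw [norm_mul, norm_pow, norm_pow]
          exact lt_of_le_of_lt hGm' hm1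
        have hslit : (1 - q ^ jk.1 * p ^ jk.2) ∈ Complex.slitPlane := by
          rw [Complex.mem_slitPlane_iff]
          left
          have hre : (q ^ jk.1 * p ^ jk.2).re < 1 := lt_of_le_of_lt (Complex.re_le_norm _) hc1
          simp only [Complex.sub_re, Complex.one_re]
          linarith
        have hcont1 : ContinuousAt (fun z : ℂ => 1 - z * q ^ jk.1 * p ^ jk.2) 1 :=
          continuousAt_const.sub ((continuousAt_id.mul continuousAt_const).mul continuousAt_const)
        have hten : Tendsto (fun z : ℂ => 1 - z * q ^ jk.1 * p ^ jk.2) (𝓝[≠] (1:ℂ))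
            (𝓝 (1 - q ^ jk.1 * p ^ jk.2)) := by
          refine Tendsto.mono_left ?_ nhdsWithin_le_nhds
          simpa using hcont1.tendsto
        have hfun : (fun z : ℂ => Complex.log (1 - B z jk))
            = fun z : ℂ => Complex.log (1 - z * q ^ jk.1 * p ^ jk.2) := by
          funext z
          rw [hBdef]
          simp only [if_neg h]
        rw [hfun]
        simp only [if_neg h]
        exact hten.clog hslit
    · filter_upwards [hball] with z hz
      intro jk
      calc ‖Complex.log (1 - B z jk)‖
          ≤ CB * ‖B z jk‖ := my_norm_log_one_sub_le ht1 (normBt z hz jk)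
        _ ≤ CB * ((1 + δ) * G jk) := mul_le_mul_of_nonneg_left (normB z hz jk) hCB0
  -- eventual equality
  have hEq : ∀ᶠ z in 𝓝[≠] (1:ℂ), (1 - z) * ellGamma z q p
      = Complex.exp (∑' jk : ℕ × ℕ, Complex.log (1 - z⁻¹ * q ^ (jk.1+1) * p ^ (jk.2+1)))
        / Complex.exp (∑' jk : ℕ × ℕ, Complex.log (1 - B z jk)) := by
    filter_upwards [hball, self_mem_nhdsWithin] with z hz hz1
    have hz1' : z ≠ 1 := hz1
    have hz1'' : (1:ℂ) - z ≠ 0 := sub_ne_zero.mpr (Ne.symm hz1')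
    have hsumA : Summable (fun jk : ℕ × ℕ => z⁻¹ * q ^ (jk.1+1) * p ^ (jk.2+1)) :=
      Summable.of_norm_bounded (hG.mul_left s) (normA z hz)
    have hA1 : ∀ jk : ℕ × ℕ, ‖z⁻¹ * q ^ (jk.1+1) * p ^ (jk.2+1)‖ < 1 :=
      fun jk => lt_of_le_of_lt (normAs z hz jk) hs1
    have hsumB : Summable (B z) := by
      apply Summable.of_norm_bounded (hG.mul_left (1 + δ))
      exact normB z hz
    have hB1 : ∀ jk, ‖B z jk‖ < 1 := fun jk => lt_of_le_of_lt (normBt z hz jk) ht1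
    have hPA := my_hasProd_one_sub hsumA hA1
    have hPB := my_hasProd_one_sub hsumB hB1
    have hquot := my_hasProd_div hPA hPB (Complex.exp_ne_zero _)
    have hsingle : HasProd (fun jk : ℕ × ℕ => if jk = (0,0) then (1 - z)⁻¹ else (1:ℂ))
        ((1 - z)⁻¹) := by
      have h := hasProd_single (f := fun jk : ℕ × ℕ => if jk = (0,0) then (1 - z)⁻¹ else (1:ℂ))
        ((0,0) : ℕ × ℕ) (fun b hb => if_neg hb)
      simpa using h
    have hmul := hquot.mul hsingle
    have hfun : (fun jk : ℕ × ℕ =>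
        ((1 - z⁻¹ * q ^ (jk.1+1) * p ^ (jk.2+1)) / (1 - B z jk))
          * (if jk = (0,0) then (1 - z)⁻¹ else 1))
        = fun jk : ℕ × ℕ => (1 - z⁻¹ * q ^ (jk.1 + 1) * p ^ (jk.2 + 1))
            / (1 - z * q ^ jk.1 * p ^ jk.2) := by
      funext jk
      rw [hBdef]
      by_cases h : jk = (0,0)
      · subst h
        simp [div_eq_mul_inv]
      · have h0 : jk ≠ 0 := fun hh => h (by rw [hh]; rfl)
        simp [h, h0]
    have hG2 : ellGamma z q p
        = (Complex.exp (∑' jk : ℕ × ℕ, Complex.log (1 - z⁻¹ * q ^ (jk.1+1) * p ^ (jk.2+1)))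
          / Complex.exp (∑' jk : ℕ × ℕ, Complex.log (1 - B z jk))) * (1 - z)⁻¹ := by
      have hval := hmul.tprod_eq
      calc ellGamma z q p
          = ∏' jk : ℕ × ℕ, (1 - z⁻¹ * q ^ (jk.1 + 1) * p ^ (jk.2 + 1))
              / (1 - z * q ^ jk.1 * p ^ jk.2) := rfl
        _ = ∏' jk : ℕ × ℕ, ((1 - z⁻¹ * q ^ (jk.1+1) * p ^ (jk.2+1)) / (1 - B z jk))
              * (if jk = (0,0) then (1 - z)⁻¹ else 1) := by rw [hfun]
        _ = _ := hval
    have hx : ∀ a b : ℂ, a ≠ 0 → a * (b * a⁻¹) = b := by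
      intro a b ha
      rw [mul_comm b, ← mul_assoc, mul_inv_cancel₀ ha, one_mul]
    rw [hG2]
    exact hx _ _ hz1''
  -- the limit of the quotient
  have hfinal := Tendsto.div ((Complex.continuous_exp.tendsto _).comp hSA)
      ((Complex.continuous_exp.tendsto _).comp hSB) (Complex.exp_ne_zero _)
  -- identify the limit value
  have hvalue :
      Complex.exp (∑' jk : ℕ × ℕ, Complex.log (1 - q ^ (jk.1+1) * p ^ (jk.2+1)))
        / Complex.exp (∑' jk : ℕ × ℕ,
            Complex.log (1 - (if jk = (0,0) then 0 else q ^ jk.1 * p ^ jk.2)))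
      = 1 / (qPochInf q q * qPochInf p p) := by
    have hid := my_prod_identity hq1' hp1'
    have hEne : Complex.exp (∑' jk : ℕ × ℕ,
        Complex.log (1 - q ^ (jk.1+1) * p ^ (jk.2+1))) ≠ 0 := Complex.exp_ne_zero _
    have hDne : Complex.exp (∑' jk : ℕ × ℕ,
        Complex.log (1 - (if jk = (0,0) then 0 else q ^ jk.1 * p ^ jk.2))) ≠ 0 :=
      Complex.exp_ne_zero _
    have hqqpp : qPochInf q q * qPochInf p p ≠ 0 := by
      intro h
      rw [h, zero_mul] at hid
      exact hDne hid
    rw [hid]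
    rw [div_eq_div_iff (by rw [← hid]; exact hDne) hqqpp]
    ring
  rw [← hvalue]
  refine hfinal.congr' ?_
  filter_upwards [hEq] with z h
  exact h.symm
end

section
/- Under the assumptions Im(ω₁/ω₂), Im(ω₃/ω₂), Im(ω₃/ω₁) > 0, the modified elliptic gamma function satisfies the reflection equation G(a;ω) G(b;ω) = 1 whenever a + b = ω₁ + ω₂ + ω₃. -/
set_option maxHeartbeats 1000000

open Complex

set_option maxHeartbeats 1000000 in
private lemma summable_geom2 (c s t : ℂ) (hs : ‖s‖ < 1) (ht : ‖t‖ < 1) :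
    Summable fun jk : ℕ × ℕ => c * s ^ jk.1 * t ^ jk.2 := by
  have hf : Summable fun j : ℕ => ‖c * s ^ j‖ := by
    simpa [norm_mul, norm_pow] using
      (summable_geometric_of_lt_one (norm_nonneg s) hs).mul_left ‖c‖
  have hg : Summable fun k : ℕ => ‖(t : ℂ) ^ k‖ := by
    simpa [norm_pow] using summable_geometric_of_lt_one (norm_nonneg t) ht
  exact summable_mul_of_summable_norm (f := fun j : ℕ => c * s ^ j) (g := fun k : ℕ => (t : ℂ) ^ k) hf hg

private lemma multipliable_one_add' {ι : Type*} (g : ι → ℂ) (hg : Summable g)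
    (h0 : ∀ i, 1 + g i ≠ 0) : Multipliable fun i => 1 + g i := by
  have hsmall : ∀ᶠ i in Filter.cofinite, ‖g i‖ ≤ 1 / 2 := by
    have h2 := Metric.tendsto_nhds.mp hg.tendsto_cofinite_zero (1 / 2) (by norm_num)
    filter_upwards [h2] with i hi
    simpa [dist_eq_norm] using hi.le
  have hlog : Summable fun i => Complex.log (1 + g i) := by
    apply Summable.of_norm_bounded_eventually (g := fun i => 3 / 2 * ‖g i‖) (hg.norm.mul_left _)
    filter_upwards [hsmall] with i hi
    exact Complex.norm_log_one_add_half_le_self hi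
  exact Complex.multipliable_of_summable_log hlog

private lemma multipliable_one_add_inv' {ι : Type*} (g : ι → ℂ) (hg : Summable g)
    (h0 : ∀ i, 1 + g i ≠ 0) : Multipliable fun i => (1 + g i)⁻¹ := by
  have hsmall : ∀ᶠ i in Filter.cofinite, ‖g i‖ ≤ 1 / 2 := by
    have h2 := Metric.tendsto_nhds.mp hg.tendsto_cofinite_zero (1 / 2) (by norm_num)
    filter_upwards [h2] with i hi
    simpa [dist_eq_norm] using hi.le
  have hh : Summable fun i => -g i / (1 + g i) := by
    apply Summable.of_norm_bounded_eventually (g := fun i => 2 * ‖g i‖) (hg.norm.mul_left _)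
    filter_upwards [hsmall] with i hi
    have h1 : (1 : ℝ) / 2 ≤ ‖1 + g i‖ := by
      have h2 : ‖(1 : ℂ)‖ ≤ ‖1 + g i‖ + ‖g i‖ := by
        simpa using norm_add_le (1 + g i) (-g i)
      simp only [norm_one] at h2
      linarith
    rw [norm_div, norm_neg, div_le_iff₀ (by linarith : (0:ℝ) < ‖1 + g i‖)]
    nlinarith [norm_nonneg (g i)]
  have key : ∀ i, 1 + -g i / (1 + g i) = (1 + g i)⁻¹ := by
    intro i
    have h0i := h0 i
    field_simp
    ring
  have h0' : ∀ i, 1 + -g i / (1 + g i) ≠ 0 := by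
    intro i
    rw [key i]
    exact inv_ne_zero (h0 i)
  exact (multipliable_one_add' _ hh h0').congr key

private lemma multipliable_one_sub_geom (c s t : ℂ) (hs : ‖s‖ < 1) (ht : ‖t‖ < 1)
    (h0 : ∀ j k : ℕ, 1 - c * s ^ j * t ^ k ≠ 0) :
    Multipliable fun jk : ℕ × ℕ => 1 - c * s ^ jk.1 * t ^ jk.2 := by
  have hg := (summable_geom2 c s t hs ht).neg
  have h0' : ∀ jk : ℕ × ℕ, 1 + -(c * s ^ jk.1 * t ^ jk.2) ≠ 0 := fun jk => by
    simpa [sub_eq_add_neg] using h0 jk.1 jk.2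
  exact (multipliable_one_add' _ hg h0').congr fun jk => by ring

private lemma multipliable_one_sub_geom_inv (c s t : ℂ) (hs : ‖s‖ < 1) (ht : ‖t‖ < 1)
    (h0 : ∀ j k : ℕ, 1 - c * s ^ j * t ^ k ≠ 0) :
    Multipliable fun jk : ℕ × ℕ => (1 - c * s ^ jk.1 * t ^ jk.2)⁻¹ := by
  have hg := (summable_geom2 c s t hs ht).neg
  have h0' : ∀ jk : ℕ × ℕ, 1 + -(c * s ^ jk.1 * t ^ jk.2) ≠ 0 := fun jk => by
    simpa [sub_eq_add_neg] using h0 jk.1 jk.2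
  exact (multipliable_one_add_inv' _ hg h0').congr fun jk => by rw [← sub_eq_add_neg]

private lemma multipliable_modG_factor (x1 x2 x3 x4 q p qt r : ℂ)
    (hq : ‖q‖ < 1) (hp : ‖p‖ < 1) (hqt : ‖qt‖ < 1) (hr : ‖r‖ < 1)
    (h : ∀ j k : ℕ,
      (1 - x1 * q ^ (j + 1) * p ^ (k + 1)) ≠ 0 ∧
      (1 - x2 * qt ^ (j + 1) * r ^ k) ≠ 0 ∧
      (1 - x3 * q ^ j * p ^ k) ≠ 0 ∧
      (1 - x4 * qt ^ j * r ^ (k + 1)) ≠ 0) :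
    Multipliable fun jk : ℕ × ℕ =>
      ((1 - x1 * q ^ (jk.1 + 1) * p ^ (jk.2 + 1)) * (1 - x2 * qt ^ (jk.1 + 1) * r ^ jk.2)) /
      ((1 - x3 * q ^ jk.1 * p ^ jk.2) * (1 - x4 * qt ^ jk.1 * r ^ (jk.2 + 1))) := by
  have m1 : Multipliable fun jk : ℕ × ℕ => 1 - x1 * q ^ (jk.1 + 1) * p ^ (jk.2 + 1) := by
    have := multipliable_one_sub_geom (x1 * q * p) q p hq hp (fun j k => by
      rw [show x1 * q * p * q ^ j * p ^ k = x1 * q ^ (j + 1) * p ^ (k + 1) by ring]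
      exact (h j k).1)
    exact this.congr fun jk => by ring
  have m2 : Multipliable fun jk : ℕ × ℕ => 1 - x2 * qt ^ (jk.1 + 1) * r ^ jk.2 := by
    have := multipliable_one_sub_geom (x2 * qt) qt r hqt hr (fun j k => by
      rw [show x2 * qt * qt ^ j * r ^ k = x2 * qt ^ (j + 1) * r ^ k by ring]
      exact (h j k).2.1)
    exact this.congr fun jk => by ring
  have m3 : Multipliable fun jk : ℕ × ℕ => (1 - x3 * q ^ jk.1 * p ^ jk.2)⁻¹ :=
    multipliable_one_sub_geom_inv x3 q p hq hp (fun j k => (h j k).2.2.1)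
  have m4 : Multipliable fun jk : ℕ × ℕ => (1 - x4 * qt ^ jk.1 * r ^ (jk.2 + 1))⁻¹ := by
    have := multipliable_one_sub_geom_inv (x4 * r) qt r hqt hr (fun j k => by
      rw [show x4 * r * qt ^ j * r ^ k = x4 * qt ^ j * r ^ (k + 1) by ring]
      exact (h j k).2.2.2)
    exact this.congr fun jk => by ring
  have := (m1.mul m2).mul (m3.mul m4)
  exact this.congr fun jk => by rw [div_eq_mul_inv, mul_inv]

/-- The modified elliptic gamma function `G(u;ω)`, with
`q = e^{2πiω₁/ω₂}`, `p = e^{2πiω₃/ω₂}`, `r = e^{2πiω₃/ω₁}`, `q̃ = e^{-2πiω₂/ω₁}`. -/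
noncomputable def modG (u ω₁ ω₂ ω₃ : ℂ) : ℂ :=
  ∏' jk : ℕ × ℕ,
    ((1 - Complex.exp (-(2 * Real.pi * Complex.I * u / ω₂)) *
          Complex.exp (2 * Real.pi * Complex.I * ω₁ / ω₂) ^ (jk.1 + 1) *
          Complex.exp (2 * Real.pi * Complex.I * ω₃ / ω₂) ^ (jk.2 + 1)) *
      (1 - Complex.exp (2 * Real.pi * Complex.I * u / ω₁) *
          Complex.exp (-(2 * Real.pi * Complex.I * ω₂ / ω₁)) ^ (jk.1 + 1) *
          Complex.exp (2 * Real.pi * Complex.I * ω₃ / ω₁) ^ jk.2)) /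
    ((1 - Complex.exp (2 * Real.pi * Complex.I * u / ω₂) *
          Complex.exp (2 * Real.pi * Complex.I * ω₁ / ω₂) ^ jk.1 *
          Complex.exp (2 * Real.pi * Complex.I * ω₃ / ω₂) ^ jk.2) *
      (1 - Complex.exp (-(2 * Real.pi * Complex.I * u / ω₁)) *
          Complex.exp (-(2 * Real.pi * Complex.I * ω₂ / ω₁)) ^ jk.1 *
          Complex.exp (2 * Real.pi * Complex.I * ω₃ / ω₁) ^ (jk.2 + 1)))

/-- All numerator and denominator factors of `modG` are nonvanishing at `u`
(`u` avoids the poles and zeros of `G`). -/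
def modGRegular (u ω₁ ω₂ ω₃ : ℂ) : Prop :=
  ∀ j k : ℕ,
    (1 - Complex.exp (-(2 * Real.pi * Complex.I * u / ω₂)) *
        Complex.exp (2 * Real.pi * Complex.I * ω₁ / ω₂) ^ (j + 1) *
        Complex.exp (2 * Real.pi * Complex.I * ω₃ / ω₂) ^ (k + 1)) ≠ 0 ∧
    (1 - Complex.exp (2 * Real.pi * Complex.I * u / ω₁) *
        Complex.exp (-(2 * Real.pi * Complex.I * ω₂ / ω₁)) ^ (j + 1) *
        Complex.exp (2 * Real.pi * Complex.I * ω₃ / ω₁) ^ k) ≠ 0 ∧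
    (1 - Complex.exp (2 * Real.pi * Complex.I * u / ω₂) *
        Complex.exp (2 * Real.pi * Complex.I * ω₁ / ω₂) ^ j *
        Complex.exp (2 * Real.pi * Complex.I * ω₃ / ω₂) ^ k) ≠ 0 ∧
    (1 - Complex.exp (-(2 * Real.pi * Complex.I * u / ω₁)) *
        Complex.exp (-(2 * Real.pi * Complex.I * ω₂ / ω₁)) ^ j *
        Complex.exp (2 * Real.pi * Complex.I * ω₃ / ω₁) ^ (k + 1)) ≠ 0

private lemma div_mul_div_eq_one {x y : ℂ} (hx : x ≠ 0) (hy : y ≠ 0) :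
    x / y * (y / x) = 1 := by
  field_simp

private lemma norm_cexp_lt_one {w v : ℂ} (h : 0 < (w / v).im) :
    ‖Complex.exp (2 * Real.pi * Complex.I * w / v)‖ < 1 := by
  have : 2 * (Real.pi : ℂ) * Complex.I * w / v = 2 * (Real.pi : ℂ) * Complex.I * (w / v) := by
    ring
  rw [this, Complex.norm_exp]
  have hre : (2 * (Real.pi : ℂ) * Complex.I * (w / v)).re = -(2 * Real.pi * (w / v).im) := by
    simp [Complex.mul_re, Complex.mul_im]
  rw [hre]
  rw [show (1 : ℝ) = Real.exp 0 by simp]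
  apply Real.exp_lt_exp.mpr
  have := Real.pi_pos
  nlinarith

theorem modG_reflection (ω₁ ω₂ ω₃ a b : ℂ)
    (h12 : 0 < (ω₁ / ω₂).im) (h32 : 0 < (ω₃ / ω₂).im) (h31 : 0 < (ω₃ / ω₁).im)
    (hab : a + b = ω₁ + ω₂ + ω₃)
    (ha : modGRegular a ω₁ ω₂ ω₃) (hb : modGRegular b ω₁ ω₂ ω₃) :
    modG a ω₁ ω₂ ω₃ * modG b ω₁ ω₂ ω₃ = 1 := by
  have hω₂ : ω₂ ≠ 0 := by
    intro h; rw [h] at h12; simp at h12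
  have hω₁ : ω₁ ≠ 0 := by
    intro h; rw [h] at h31; simp at h31
  -- norms
  have hq : ‖Complex.exp (2 * Real.pi * Complex.I * ω₁ / ω₂)‖ < 1 := norm_cexp_lt_one h12
  have hp : ‖Complex.exp (2 * Real.pi * Complex.I * ω₃ / ω₂)‖ < 1 := norm_cexp_lt_one h32
  have hr : ‖Complex.exp (2 * Real.pi * Complex.I * ω₃ / ω₁)‖ < 1 := norm_cexp_lt_one h31
  have hqt : ‖Complex.exp (-(2 * Real.pi * Complex.I * ω₂ / ω₁))‖ < 1 := by
    have him : 0 < (-ω₂ / ω₁).im := by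
      have h1 : (ω₂ / ω₁) = (ω₁ / ω₂)⁻¹ := by
        field_simp
      have h2 : (ω₂ / ω₁).im < 0 := by
        rw [h1, Complex.inv_im]
        apply div_neg_of_neg_of_pos (by linarith)
        have : ω₁ / ω₂ ≠ 0 := by
          intro h; rw [h] at h12; simp at h12
        exact Complex.normSq_pos.mpr this
      rw [neg_div, Complex.neg_im]
      linarith
    have := norm_cexp_lt_one him
    rwa [show 2 * (Real.pi : ℂ) * Complex.I * -ω₂ / ω₁ = -(2 * Real.pi * Complex.I * ω₂ / ω₁)
      by ring] at this
  -- multipliability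
  have Ma := multipliable_modG_factor
    (Complex.exp (-(2 * Real.pi * Complex.I * a / ω₂)))
    (Complex.exp (2 * Real.pi * Complex.I * a / ω₁))
    (Complex.exp (2 * Real.pi * Complex.I * a / ω₂))
    (Complex.exp (-(2 * Real.pi * Complex.I * a / ω₁)))
    _ _ _ _ hq hp hqt hr ha
  have Mb := multipliable_modG_factor
    (Complex.exp (-(2 * Real.pi * Complex.I * b / ω₂)))
    (Complex.exp (2 * Real.pi * Complex.I * b / ω₁))
    (Complex.exp (2 * Real.pi * Complex.I * b / ω₂))
    (Complex.exp (-(2 * Real.pi * Complex.I * b / ω₁)))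
    _ _ _ _ hq hp hqt hr hb
  -- key exponential identities
  have key1 : ∀ u v : ℂ, u + v = ω₁ + ω₂ + ω₃ →
      Complex.exp (-(2 * Real.pi * Complex.I * v / ω₂)) *
        Complex.exp (2 * Real.pi * Complex.I * ω₁ / ω₂) *
        Complex.exp (2 * Real.pi * Complex.I * ω₃ / ω₂) =
      Complex.exp (2 * Real.pi * Complex.I * u / ω₂) := by
    intro u v huv
    rw [← Complex.exp_add, ← Complex.exp_add]
    have hv : v = ω₁ + ω₂ + ω₃ - u := by linear_combination huv
    have harg : -(2 * Real.pi * Complex.I * v / ω₂) + 2 * Real.pi * Complex.I * ω₁ / ω₂ +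
        2 * Real.pi * Complex.I * ω₃ / ω₂ =
        2 * Real.pi * Complex.I * u / ω₂ + -(2 * Real.pi * Complex.I) := by
      rw [hv]
      field_simp
      ring
    rw [harg, Complex.exp_add, Complex.exp_neg, Complex.exp_two_pi_mul_I]
    simp
  have key2 : ∀ u v : ℂ, u + v = ω₁ + ω₂ + ω₃ →
      Complex.exp (2 * Real.pi * Complex.I * v / ω₁) *
        Complex.exp (-(2 * Real.pi * Complex.I * ω₂ / ω₁)) =
      Complex.exp (-(2 * Real.pi * Complex.I * u / ω₁)) *
        Complex.exp (2 * Real.pi * Complex.I * ω₃ / ω₁) := by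
    intro u v huv
    rw [← Complex.exp_add, ← Complex.exp_add]
    have hv : v = ω₁ + ω₂ + ω₃ - u := by linear_combination huv
    have harg : 2 * Real.pi * Complex.I * v / ω₁ + -(2 * Real.pi * Complex.I * ω₂ / ω₁) =
        (-(2 * Real.pi * Complex.I * u / ω₁) + 2 * Real.pi * Complex.I * ω₃ / ω₁) +
          2 * Real.pi * Complex.I := by
      rw [hv]
      field_simp
      ring
    rw [harg, Complex.exp_add, Complex.exp_two_pi_mul_I]
    simp
  -- pointwise product is 1
  have hpt : ∀ jk : ℕ × ℕ,
      (((1 - Complex.exp (-(2 * Real.pi * Complex.I * a / ω₂)) *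
          Complex.exp (2 * Real.pi * Complex.I * ω₁ / ω₂) ^ (jk.1 + 1) *
          Complex.exp (2 * Real.pi * Complex.I * ω₃ / ω₂) ^ (jk.2 + 1)) *
      (1 - Complex.exp (2 * Real.pi * Complex.I * a / ω₁) *
          Complex.exp (-(2 * Real.pi * Complex.I * ω₂ / ω₁)) ^ (jk.1 + 1) *
          Complex.exp (2 * Real.pi * Complex.I * ω₃ / ω₁) ^ jk.2)) /
    ((1 - Complex.exp (2 * Real.pi * Complex.I * a / ω₂) *
          Complex.exp (2 * Real.pi * Complex.I * ω₁ / ω₂) ^ jk.1 *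
          Complex.exp (2 * Real.pi * Complex.I * ω₃ / ω₂) ^ jk.2) *
      (1 - Complex.exp (-(2 * Real.pi * Complex.I * a / ω₁)) *
          Complex.exp (-(2 * Real.pi * Complex.I * ω₂ / ω₁)) ^ jk.1 *
          Complex.exp (2 * Real.pi * Complex.I * ω₃ / ω₁) ^ (jk.2 + 1)))) *
      (((1 - Complex.exp (-(2 * Real.pi * Complex.I * b / ω₂)) *
          Complex.exp (2 * Real.pi * Complex.I * ω₁ / ω₂) ^ (jk.1 + 1) *
          Complex.exp (2 * Real.pi * Complex.I * ω₃ / ω₂) ^ (jk.2 + 1)) *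
      (1 - Complex.exp (2 * Real.pi * Complex.I * b / ω₁) *
          Complex.exp (-(2 * Real.pi * Complex.I * ω₂ / ω₁)) ^ (jk.1 + 1) *
          Complex.exp (2 * Real.pi * Complex.I * ω₃ / ω₁) ^ jk.2)) /
    ((1 - Complex.exp (2 * Real.pi * Complex.I * b / ω₂) *
          Complex.exp (2 * Real.pi * Complex.I * ω₁ / ω₂) ^ jk.1 *
          Complex.exp (2 * Real.pi * Complex.I * ω₃ / ω₂) ^ jk.2) *
      (1 - Complex.exp (-(2 * Real.pi * Complex.I * b / ω₁)) *
          Complex.exp (-(2 * Real.pi * Complex.I * ω₂ / ω₁)) ^ jk.1 *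
          Complex.exp (2 * Real.pi * Complex.I * ω₃ / ω₁) ^ (jk.2 + 1)))) = 1 := by
    intro ⟨j, k⟩
    obtain ⟨ha1, ha2, ha3, ha4⟩ := ha j k
    have hba : b + a = ω₁ + ω₂ + ω₃ := by linear_combination hab
    -- numerator-of-b = denominator-of-a and vice versa
    have e1 : Complex.exp (-(2 * Real.pi * Complex.I * b / ω₂)) *
        Complex.exp (2 * Real.pi * Complex.I * ω₁ / ω₂) ^ (j + 1) *
        Complex.exp (2 * Real.pi * Complex.I * ω₃ / ω₂) ^ (k + 1) =
        Complex.exp (2 * Real.pi * Complex.I * a / ω₂) *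
        Complex.exp (2 * Real.pi * Complex.I * ω₁ / ω₂) ^ j *
        Complex.exp (2 * Real.pi * Complex.I * ω₃ / ω₂) ^ k := by
      rw [pow_succ, pow_succ, ← key1 a b hab]
      ring
    have e2 : Complex.exp (2 * Real.pi * Complex.I * b / ω₁) *
        Complex.exp (-(2 * Real.pi * Complex.I * ω₂ / ω₁)) ^ (j + 1) *
        Complex.exp (2 * Real.pi * Complex.I * ω₃ / ω₁) ^ k =
        Complex.exp (-(2 * Real.pi * Complex.I * a / ω₁)) *
        Complex.exp (-(2 * Real.pi * Complex.I * ω₂ / ω₁)) ^ j *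
        Complex.exp (2 * Real.pi * Complex.I * ω₃ / ω₁) ^ (k + 1) := by
      rw [pow_succ, pow_succ]
      have := key2 a b hab
      calc Complex.exp (2 * Real.pi * Complex.I * b / ω₁) *
          (Complex.exp (-(2 * Real.pi * Complex.I * ω₂ / ω₁)) ^ j *
            Complex.exp (-(2 * Real.pi * Complex.I * ω₂ / ω₁))) *
          Complex.exp (2 * Real.pi * Complex.I * ω₃ / ω₁) ^ k
          = (Complex.exp (2 * Real.pi * Complex.I * b / ω₁) *
            Complex.exp (-(2 * Real.pi * Complex.I * ω₂ / ω₁))) *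
            Complex.exp (-(2 * Real.pi * Complex.I * ω₂ / ω₁)) ^ j *
            Complex.exp (2 * Real.pi * Complex.I * ω₃ / ω₁) ^ k := by ring
        _ = _ := by rw [this]; ring
    have e3 : Complex.exp (-(2 * Real.pi * Complex.I * a / ω₂)) *
        Complex.exp (2 * Real.pi * Complex.I * ω₁ / ω₂) ^ (j + 1) *
        Complex.exp (2 * Real.pi * Complex.I * ω₃ / ω₂) ^ (k + 1) =
        Complex.exp (2 * Real.pi * Complex.I * b / ω₂) *
        Complex.exp (2 * Real.pi * Complex.I * ω₁ / ω₂) ^ j *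
        Complex.exp (2 * Real.pi * Complex.I * ω₃ / ω₂) ^ k := by
      rw [pow_succ, pow_succ, ← key1 b a hba]
      ring
    have e4 : Complex.exp (2 * Real.pi * Complex.I * a / ω₁) *
        Complex.exp (-(2 * Real.pi * Complex.I * ω₂ / ω₁)) ^ (j + 1) *
        Complex.exp (2 * Real.pi * Complex.I * ω₃ / ω₁) ^ k =
        Complex.exp (-(2 * Real.pi * Complex.I * b / ω₁)) *
        Complex.exp (-(2 * Real.pi * Complex.I * ω₂ / ω₁)) ^ j *
        Complex.exp (2 * Real.pi * Complex.I * ω₃ / ω₁) ^ (k + 1) := by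
      rw [pow_succ, pow_succ]
      have := key2 b a hba
      calc Complex.exp (2 * Real.pi * Complex.I * a / ω₁) *
          (Complex.exp (-(2 * Real.pi * Complex.I * ω₂ / ω₁)) ^ j *
            Complex.exp (-(2 * Real.pi * Complex.I * ω₂ / ω₁))) *
          Complex.exp (2 * Real.pi * Complex.I * ω₃ / ω₁) ^ k
          = (Complex.exp (2 * Real.pi * Complex.I * a / ω₁) *
            Complex.exp (-(2 * Real.pi * Complex.I * ω₂ / ω₁))) *
            Complex.exp (-(2 * Real.pi * Complex.I * ω₂ / ω₁)) ^ j *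
            Complex.exp (2 * Real.pi * Complex.I * ω₃ / ω₁) ^ k := by ring
        _ = _ := by rw [this]; ring
    have hb3 := (hb j k).2.2.1
    have hb4 := (hb j k).2.2.2
    simp only
    rw [e1, e2, e3, e4]
    exact div_mul_div_eq_one (mul_ne_zero hb3 hb4) (mul_ne_zero ha3 ha4)
  -- conclude
  unfold modG
  rw [← Ma.tprod_mul Mb]
  calc (∏' (jk : ℕ × ℕ), _) = ∏' (_ : ℕ × ℕ), (1 : ℂ) := tprod_congr hpt
    _ = 1 := tprod_one
end
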